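/- For every nonnegative integer n there exists a constant C_n > 0 depending only on n such that for all nonzero complex z with nonnegative imaginary part and |z| ≤ C_n, one has |H_n'(z)/H_n(z)| ≤ 4(n+1)/|z|, where H_n is the Hankel function of the first kind of order n. -/

import Mathlib

noncomputable def besselJnat (n : ℕ) (z : ℂ) : ℂ :=
  (z/2)^n * ∑' k : ℕ, (-1:ℂ)^k * (z^2/4)^k /
    ((Nat.factorial k : ℂ) * (Nat.factorial (n+k) : ℂ))

/-- Logarithm with branch cut along the negative imaginary axis. -/
noncomputable def logCut (z : ℂ) : ℂ :=
  Complex.log (-Complex.I * z) + Complex.I * (Real.pi/2)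

/-- Digamma function Ψ(z) = Γ'(z)/Γ(z). -/
noncomputable def digammaC (z : ℂ) : ℂ := deriv Complex.Gamma z / Complex.Gamma z

noncomputable def besselYnat (n : ℕ) (z : ℂ) : ℂ :=
  (2/(Real.pi:ℂ)) * logCut (z/2) * besselJnat n z
  - ((1:ℂ)/Real.pi) * (z/2)^(-(n:ℤ)) *
      ∑ k ∈ Finset.range n, ((Nat.factorial (n-1-k) : ℂ)/(Nat.factorial k : ℂ)) * (z^2/4)^k
  - ((1:ℂ)/Real.pi) * (z/2)^n *
      ∑' k : ℕ, (digammaC ((k:ℂ)+1) + digammaC ((n:ℂ)+(k:ℂ)+1)) * (-(z^2)/4)^k /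
        ((Nat.factorial k : ℂ)*(Nat.factorial (n+k) : ℂ))

noncomputable def besselJ (n : ℤ) (z : ℂ) : ℂ :=
  if 0 ≤ n then besselJnat n.toNat z else (-1:ℂ)^(n.natAbs) * besselJnat n.natAbs z

noncomputable def besselY (n : ℤ) (z : ℂ) : ℂ :=
  if 0 ≤ n then besselYnat n.toNat z else (-1:ℂ)^(n.natAbs) * besselYnat n.natAbs z

/-- Hankel function of the first kind. -/
noncomputable def hankelH (n : ℤ) (z : ℂ) : ℂ := besselJ n z + Complex.I * besselY n z


open Complex Metric Set Finset
set_option maxHeartbeats 1000000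



lemma cauchy_deriv_bound {f : ℂ → ℂ} {U : Set ℂ} {c : ℂ} {R M : ℝ} (hR : 0 < R)
    (hU : IsOpen U) (hd : DifferentiableOn ℂ f U) (hsub : closedBall c R ⊆ U)
    (hM : ∀ w ∈ closedBall c R, ‖f w‖ ≤ M) : ‖deriv f c‖ ≤ M / R := by
  lift R to NNReal using hR.le with R' hR'
  have hRpos : (0:ℝ) < R' := hR
  have hdAt : ∀ z ∈ ball c R' \ (∅ : Set ℂ), DifferentiableAt ℂ f z := fun z hz =>
    hd.differentiableAt (hU.mem_nhds (hsub (ball_subset_closedBall hz.1)))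
  have hcont : ContinuousOn f (closedBall c R') := hd.continuousOn.mono hsub
  have hps := Complex.hasFPowerSeriesOnBall_of_differentiable_off_countable
    countable_empty hcont hdAt hRpos
  have hderiv : deriv f c = (cauchyPowerSeries f c R').coeff 1 :=
    hps.hasFPowerSeriesAt.deriv
  have h1 : ‖(cauchyPowerSeries f c R').coeff 1‖ = ‖cauchyPowerSeries f c R' 1‖ :=
    (FormalMultilinearSeries.norm_apply_eq_norm_coef).symm
  have h2 := norm_cauchyPowerSeries_le f c R' 1
  have hMnn : 0 ≤ M := le_trans (norm_nonneg _) (hM c (mem_closedBall_self hRpos.le))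
  have hint : IntervalIntegrable (fun θ : ℝ => ‖f (circleMap c R' θ)‖) MeasureTheory.volume
      0 (2*Real.pi) :=
    ((hcont.comp_continuous (continuous_circleMap c R')
      (fun θ => circleMap_mem_closedBall c hRpos.le θ)).norm).intervalIntegrable _ _
  have hintle : (∫ θ : ℝ in (0)..2*Real.pi, ‖f (circleMap c R' θ)‖) ≤ 2 * Real.pi * M := by
    have : (∫ θ : ℝ in (0)..2*Real.pi, ‖f (circleMap c R' θ)‖) ≤
        ∫ _ : ℝ in (0)..2*Real.pi, M := by
      apply intervalIntegral.integral_mono_on Real.two_pi_pos.le hint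
        (intervalIntegrable_const)
      intro θ _
      exact hM _ (circleMap_mem_closedBall c hRpos.le θ)
    simpa using this.trans (by simp [mul_comm])
  calc ‖deriv f c‖ = ‖cauchyPowerSeries f c R' 1‖ := by rw [hderiv, h1]
    _ ≤ ((2 * Real.pi)⁻¹ * ∫ θ : ℝ in (0)..2*Real.pi, ‖f (circleMap c R' θ)‖) * |(R':ℝ)|⁻¹ ^ 1 := h2
    _ ≤ ((2 * Real.pi)⁻¹ * (2 * Real.pi * M)) * |(R':ℝ)|⁻¹ ^ 1 := by
        apply mul_le_mul_of_nonneg_right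
        · exact mul_le_mul_of_nonneg_left hintle (by positivity)
        · positivity
    _ = M / R' := by
        rw [inv_mul_cancel_left₀ Real.two_pi_pos.ne']
        rw [_root_.abs_of_nonneg hRpos.le]
        ring



variable {c : ℕ → ℂ} {u : ℕ → ℝ}

lemma tsum_pow_summable (hu : Summable u) (hc : ∀ k, ‖c k‖ ≤ u k) {w : ℂ} (hw : ‖w‖ ≤ 1) :
    Summable (fun k => c k * w ^ k) := by
  apply Summable.of_norm
  apply hu.of_nonneg_of_le (fun k => norm_nonneg _)
  intro k
  rw [norm_mul, norm_pow]
  calc ‖c k‖ * ‖w‖ ^ k ≤ u k * 1 ^ k := by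
        apply mul_le_mul (hc k) (pow_le_pow_left₀ (norm_nonneg _) hw k) (by positivity)
          ((norm_nonneg (c k)).trans (hc k))
    _ = u k := by simp

lemma tsum_pow_norm_le (hu : Summable u) (hc : ∀ k, ‖c k‖ ≤ u k) {w : ℂ} (hw : ‖w‖ ≤ 1) :
    ‖∑' k, c k * w ^ k‖ ≤ ∑' k, u k := by
  refine (norm_tsum_le_tsum_norm ((tsum_pow_summable hu hc hw).norm)).trans ?_
  apply Summable.tsum_le_tsum _ ((tsum_pow_summable hu hc hw).norm) hu
  intro k
  rw [norm_mul, norm_pow]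
  calc ‖c k‖ * ‖w‖ ^ k ≤ u k * 1 ^ k := by
        apply mul_le_mul (hc k) (pow_le_pow_left₀ (norm_nonneg _) hw k) (by positivity)
          ((norm_nonneg (c k)).trans (hc k))
    _ = u k := by simp

lemma tsum_pow_sub_head (hu : Summable u) (hc : ∀ k, ‖c k‖ ≤ u k) {w : ℂ} (hw : ‖w‖ ≤ 1) :
    ‖(∑' k, c k * w ^ k) - c 0‖ ≤ ‖w‖ * ∑' k, u (k + 1) := by
  have hs := tsum_pow_summable hu hc hw
  have hsum1 : Summable (fun k => u (k+1)) := (summable_nat_add_iff 1).2 hu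
  have h0 : (∑' k, c k * w ^ k) = c 0 + ∑' k, c (k+1) * w ^ (k+1) := by
    rw [Summable.tsum_eq_zero_add hs]
    simp
  rw [h0]
  simp only [add_sub_cancel_left]
  have hs1 : Summable (fun k => c (k+1) * w ^ (k+1)) := (summable_nat_add_iff 1).2 hs
  refine (norm_tsum_le_tsum_norm hs1.norm).trans ?_
  have : ∀ k, ‖c (k+1) * w ^ (k+1)‖ ≤ ‖w‖ * u (k+1) := by
    intro k
    rw [norm_mul, norm_pow, pow_succ]
    calc ‖c (k+1)‖ * (‖w‖ ^ k * ‖w‖) ≤ u (k+1) * (1 * ‖w‖) := by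
          apply mul_le_mul (hc _) _ (by positivity) ((norm_nonneg _).trans (hc _))
          exact mul_le_mul_of_nonneg_right
            (by calc ‖w‖ ^ k ≤ 1 ^ k := pow_le_pow_left₀ (norm_nonneg _) hw k
                _ = 1 := one_pow k) (norm_nonneg _)
      _ = ‖w‖ * u (k+1) := by ring
  refine (Summable.tsum_le_tsum this hs1.norm (by exact hsum1.mul_left _)).trans ?_
  rw [tsum_mul_left]

lemma tsum_pow_differentiableOn (hu : Summable u) (hc : ∀ k, ‖c k‖ ≤ u k) :
    DifferentiableOn ℂ (fun w : ℂ => ∑' k, c k * w ^ k) (ball 0 1) := by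
  apply differentiableOn_tsum_of_summable_norm hu
    (fun k => (differentiable_const (c k)).mul (differentiable_pow k) |>.differentiableOn)
    isOpen_ball
  intro k w hw
  rw [mem_ball_zero_iff] at hw
  show ‖c k * w ^ k‖ ≤ u k
  rw [norm_mul, norm_pow]
  calc ‖c k‖ * ‖w‖ ^ k ≤ u k * 1 ^ k := by
        apply mul_le_mul (hc k) (pow_le_pow_left₀ (norm_nonneg _) hw.le k) (by positivity)
          ((norm_nonneg (c k)).trans (hc k))
    _ = u k := by simp



lemma Gamma_deriv_nat_bound (k : ℕ) :
    ‖deriv Complex.Gamma ((k:ℂ)+1)‖ ≤ (Nat.factorial k) * (‖deriv Complex.Gamma 1‖ + k) := by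
  induction k with
  | zero => simp
  | succ k ih =>
    have hkz : ((k:ℂ)+1) ≠ 0 := Nat.cast_add_one_ne_zero k
    have hdiff : DifferentiableAt ℂ Complex.Gamma ((k:ℂ)+1) := by
      apply Complex.differentiableAt_Gamma
      intro m h
      rw [show ((k:ℂ)+1) = (((k:ℤ)+1 : ℤ) : ℂ) by push_cast; ring,
        show (-(m:ℂ)) = (((-m : ℤ) : ℤ) : ℂ) by push_cast; ring] at h
      have h2 : (k:ℤ)+1 = -(m:ℤ) := by exact_mod_cast h
      omega
    have hrec : deriv Complex.Gamma (((k:ℂ)+1)+1)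
        = Complex.Gamma ((k:ℂ)+1) + ((k:ℂ)+1) * deriv Complex.Gamma ((k:ℂ)+1) := by
      have hev : (fun w : ℂ => Complex.Gamma (w+1)) =ᶠ[nhds ((k:ℂ)+1)]
          (fun w : ℂ => w * Complex.Gamma w) := by
        filter_upwards [isOpen_ne.mem_nhds hkz] with w hw
        exact Complex.Gamma_add_one w hw
      have h1 : deriv (fun w : ℂ => Complex.Gamma (w+1)) ((k:ℂ)+1)
          = deriv Complex.Gamma (((k:ℂ)+1)+1) := by
        rw [deriv_comp_add_const]
      have h2 : deriv (fun w : ℂ => w * Complex.Gamma w) ((k:ℂ)+1)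
          = Complex.Gamma ((k:ℂ)+1) + ((k:ℂ)+1) * deriv Complex.Gamma ((k:ℂ)+1) := by
        rw [deriv_fun_mul (c := fun w => w) differentiableAt_id hdiff]
        simp
      rw [← h1, hev.deriv_eq, h2]
    have hfac : Complex.Gamma ((k:ℂ)+1) = (Nat.factorial k : ℂ) :=
      Complex.Gamma_nat_eq_factorial k
    have : (((k+1:ℕ)):ℂ) + 1 = ((k:ℂ)+1)+1 := by push_cast; ring
    rw [this, hrec, hfac]
    set γ := ‖deriv Complex.Gamma 1‖ with hγ
    have hγnn : 0 ≤ γ := norm_nonneg _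
    calc ‖(Nat.factorial k : ℂ) + ((k:ℂ)+1) * deriv Complex.Gamma ((k:ℂ)+1)‖
        ≤ ‖(Nat.factorial k : ℂ)‖ + ‖((k:ℂ)+1)‖ * ‖deriv Complex.Gamma ((k:ℂ)+1)‖ := by
          refine (norm_add_le _ _).trans ?_
          rw [norm_mul]
      _ ≤ (Nat.factorial k) + ((k:ℝ)+1) * ((Nat.factorial k) * (γ + k)) := by
          have h1 : ‖(Nat.factorial k : ℂ)‖ = (Nat.factorial k : ℝ) := by
            rw [Complex.norm_natCast]
          have h2 : ‖((k:ℂ)+1)‖ = (k:ℝ)+1 := by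
            have : ((k:ℂ)+1) = (((k+1:ℕ)):ℂ) := by push_cast; ring
            rw [this, Complex.norm_natCast]; push_cast; ring
          rw [h1, h2]
          have := mul_le_mul_of_nonneg_left ih (by positivity : (0:ℝ) ≤ (k:ℝ)+1)
          linarith
      _ ≤ (Nat.factorial (k+1)) * (γ + (k+1:ℕ)) := by
          rw [Nat.factorial_succ]
          push_cast
          have h1 : (1:ℝ) ≤ Nat.factorial k := by exact_mod_cast Nat.one_le_iff_ne_zero.2 (Nat.factorial_ne_zero k)
          nlinarith [Nat.cast_nonneg (α := ℝ) k, Nat.cast_nonneg (α := ℝ) (Nat.factorial k)]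

lemma digammaC_nat_bound (k : ℕ) :
    ‖digammaC ((k:ℂ)+1)‖ ≤ ‖deriv Complex.Gamma 1‖ + k := by
  unfold digammaC
  rw [Complex.Gamma_nat_eq_factorial k, norm_div, Complex.norm_natCast]
  rw [div_le_iff₀ (by exact_mod_cast Nat.factorial_pos k)]
  calc ‖deriv Complex.Gamma ((k:ℂ)+1)‖ ≤ (Nat.factorial k) * (‖deriv Complex.Gamma 1‖ + k) :=
        Gamma_deriv_nat_bound k
    _ = (‖deriv Complex.Gamma 1‖ + k) * (Nat.factorial k) := by ring



lemma two_pow_le_fac (k : ℕ) : (2:ℝ)^k ≤ 2 * (Nat.factorial k) := by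
  induction k with
  | zero => norm_num
  | succ k ih =>
    rcases Nat.eq_zero_or_pos k with rfl | hk
    · norm_num
    · have h5 : (2:ℝ) ≤ (k:ℝ)+1 := by exact_mod_cast Nat.succ_le_succ hk
      have h1 : (1:ℝ) ≤ Nat.factorial k := by exact_mod_cast Nat.factorial_pos k
      rw [pow_succ, Nat.factorial_succ]
      push_cast
      nlinarith

lemma fac_inv_le (n k : ℕ) :
    (1:ℝ)/((Nat.factorial k) * (Nat.factorial (n+k))) ≤ 2*(1/2)^k := by
  have h1 : (1:ℝ) ≤ Nat.factorial (n+k) := by exact_mod_cast Nat.factorial_pos (n+k)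
  have h2 : (0:ℝ) < Nat.factorial k := by exact_mod_cast Nat.factorial_pos k
  have h3 := two_pow_le_fac k
  rw [div_le_iff₀ (by positivity)]
  have h4 : (2:ℝ)*(1/2)^k = 2/2^k := by
    rw [div_pow, one_pow]; ring
  rw [h4, div_mul_eq_mul_div, le_div_iff₀ (by positivity)]
  calc (1:ℝ) * 2^k = 2^k := by ring
    _ ≤ 2 * Nat.factorial k := h3
    _ ≤ 2 * ((Nat.factorial k) * (Nat.factorial (n+k))) := by nlinarith


lemma summable_uA : Summable (fun k : ℕ => 2*(1/2:ℝ)^k) :=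
  (summable_geometric_of_lt_one (by norm_num) (by norm_num)).mul_left 2

lemma tsum_uA : ∑' k : ℕ, 2*(1/2:ℝ)^k = 4 := by
  rw [tsum_mul_left, tsum_geometric_of_lt_one (by norm_num) (by norm_num)]
  ring

lemma tsum_uA' : ∑' k : ℕ, 2*(1/2:ℝ)^(k+1) = 2 := by
  have : ∀ k : ℕ, 2*(1/2:ℝ)^(k+1) = (1/2:ℝ)^k := fun k => by rw [pow_succ]; ring
  simp_rw [this]
  rw [tsum_geometric_of_lt_one (by norm_num) (by norm_num)]
  ring

lemma summable_uB (a : ℝ) : Summable (fun k : ℕ => (a + 2*k)*(2*(1/2:ℝ)^k)) := by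
  have h1 : Summable (fun k : ℕ => a*2*(1/2:ℝ)^k) :=
    (summable_geometric_of_lt_one (by norm_num) (by norm_num)).mul_left _
  have h2 : Summable (fun k : ℕ => 4*((k:ℝ)*(1/2:ℝ)^k)) :=
    ((summable_pow_mul_geometric_of_norm_lt_one 1 (by rw [Real.norm_eq_abs]; rw [abs_of_pos]; norm_num; norm_num
      : ‖(1/2:ℝ)‖ < 1)).congr (fun k => by ring)).mul_left 4
  exact ((h1.add h2).congr (fun k => by push_cast; ring))

lemma tsum_uB (a : ℝ) : ∑' k : ℕ, (a + 2*(k:ℝ))*(2*(1/2:ℝ)^k) = 4*a + 8 := by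
  have h1 : Summable (fun k : ℕ => a*2*(1/2:ℝ)^k) :=
    (summable_geometric_of_lt_one (by norm_num) (by norm_num)).mul_left _
  have h2 : Summable (fun k : ℕ => 4*((k:ℝ)*(1/2:ℝ)^k)) :=
    ((summable_pow_mul_geometric_of_norm_lt_one 1 (by rw [Real.norm_eq_abs]; rw [abs_of_pos]; norm_num; norm_num
      : ‖(1/2:ℝ)‖ < 1)).congr (fun k => by ring)).mul_left 4
  have heq : ∀ k : ℕ, (a + 2*(k:ℝ))*(2*(1/2:ℝ)^k)
      = a*2*(1/2:ℝ)^k + 4*((k:ℝ)*(1/2:ℝ)^k) := fun k => by ring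
  rw [tsum_congr heq, Summable.tsum_add h1 h2, tsum_mul_left, tsum_mul_left,
    tsum_geometric_of_lt_one (by norm_num) (by norm_num),
    tsum_coe_mul_geometric_of_norm_lt_one (by rw [Real.norm_eq_abs]; rw [abs_of_pos]; norm_num; norm_num : ‖(1/2:ℝ)‖ < 1)]
  ring



noncomputable def Afun (n : ℕ) (w : ℂ) : ℂ :=
  ∑' k : ℕ, ((-1:ℂ)^k / ((Nat.factorial k : ℂ) * (Nat.factorial (n+k) : ℂ))) * w^k

noncomputable def Bfun (n : ℕ) (w : ℂ) : ℂ :=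
  ∑' k : ℕ, ((digammaC ((k:ℂ)+1) + digammaC ((n:ℂ)+(k:ℂ)+1)) /
      ((Nat.factorial k : ℂ) * (Nat.factorial (n+k) : ℂ))) * w^k

noncomputable def Pfun (n : ℕ) (w : ℂ) : ℂ :=
  ∑ k ∈ Finset.range n, ((Nat.factorial (n-1-k) : ℂ)/(Nat.factorial k : ℂ)) * w^k

lemma besselJnat_eq (n : ℕ) (z : ℂ) : besselJnat n z = (z/2)^n * Afun n (z^2/4) := by
  unfold besselJnat Afun
  congr 1
  exact tsum_congr fun k => by ring

lemma besselYnat_eq (n : ℕ) (z : ℂ) :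
    besselYnat n z = (2/(Real.pi:ℂ)) * logCut (z/2) * ((z/2)^n * Afun n (z^2/4))
      - ((1:ℂ)/Real.pi) * (z/2)^(-(n:ℤ)) * Pfun n (z^2/4)
      - ((1:ℂ)/Real.pi) * (z/2)^n * Bfun n (-(z^2)/4) := by
  unfold besselYnat Pfun Bfun
  rw [besselJnat_eq]
  congr 2
  exact tsum_congr fun k => by ring

lemma hankel_eq (n : ℕ) (z : ℂ) :
    hankelH (n:ℤ) z = (z/2)^n * Afun n (z^2/4) * (1 + (2/(Real.pi:ℂ)) * Complex.I * logCut (z/2))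
      - (Complex.I/Real.pi) * (z/2)^(-(n:ℤ)) * Pfun n (z^2/4)
      - (Complex.I/Real.pi) * (z/2)^n * Bfun n (-(z^2)/4) := by
  have h1 : besselJ (n:ℤ) z = besselJnat n z := by
    rw [besselJ, if_pos (Int.natCast_nonneg n), Int.toNat_natCast]
  have h2 : besselY (n:ℤ) z = besselYnat n z := by
    rw [besselY, if_pos (Int.natCast_nonneg n), Int.toNat_natCast]
  rw [hankelH, h1, h2, besselYnat_eq, besselJnat_eq]
  ring



noncomputable def gam : ℝ := ‖deriv Complex.Gamma 1‖

lemma gam_nonneg : 0 ≤ gam := norm_nonneg _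

lemma Acoef_norm_le (n : ℕ) (k : ℕ) :
    ‖((-1:ℂ)^k / ((Nat.factorial k : ℂ) * (Nat.factorial (n+k) : ℂ)))‖ ≤ 2*(1/2:ℝ)^k := by
  rw [norm_div, norm_pow, norm_neg, norm_one, one_pow, norm_mul, Complex.norm_natCast,
    Complex.norm_natCast]
  exact fac_inv_le n k

lemma Afun_norm_le (n : ℕ) {w : ℂ} (hw : ‖w‖ ≤ 1) : ‖Afun n w‖ ≤ 4 :=
  (tsum_pow_norm_le summable_uA (Acoef_norm_le n) hw).trans (le_of_eq tsum_uA)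

lemma Afun_sub_le (n : ℕ) {w : ℂ} (hw : ‖w‖ ≤ 1) :
    ‖Afun n w - 1/(Nat.factorial n : ℂ)‖ ≤ ‖w‖ * 2 := by
  unfold Afun
  have h := tsum_pow_sub_head (c := fun k =>
      ((-1:ℂ)^k / ((Nat.factorial k : ℂ) * (Nat.factorial (n+k) : ℂ))))
    summable_uA (Acoef_norm_le n) hw
  simp only [pow_zero, Nat.factorial_zero, Nat.cast_one, one_mul, Nat.add_zero] at h
  rw [tsum_uA'] at h
  exact h

lemma Bcoef_norm_le (n : ℕ) (k : ℕ) :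
    ‖((digammaC ((k:ℂ)+1) + digammaC ((n:ℂ)+(k:ℂ)+1)) /
      ((Nat.factorial k : ℂ) * (Nat.factorial (n+k) : ℂ)))‖
      ≤ ((2*gam + n) + 2*(k:ℝ)) * (2*(1/2:ℝ)^k) := by
  rw [norm_div]
  have hnum : ‖digammaC ((k:ℂ)+1) + digammaC ((n:ℂ)+(k:ℂ)+1)‖ ≤ (2*gam + n) + 2*(k:ℝ) := by
    refine (norm_add_le _ _).trans ?_
    have h1 := digammaC_nat_bound k
    have h2 := digammaC_nat_bound (n+k)
    rw [show (((n+k:ℕ)):ℂ) = (n:ℂ)+(k:ℂ) by push_cast; ring] at h2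
    push_cast at h2
    unfold gam
    linarith
  have hd : ‖(Nat.factorial k : ℂ) * (Nat.factorial (n+k) : ℂ)‖
      = ((Nat.factorial k : ℝ) * (Nat.factorial (n+k) : ℝ)) := by
    rw [norm_mul, Complex.norm_natCast, Complex.norm_natCast]
  rw [hd]
  have hdpos : (0:ℝ) < (Nat.factorial k : ℝ) * (Nat.factorial (n+k) : ℝ) := by positivity
  calc ‖digammaC ((k:ℂ)+1) + digammaC ((n:ℂ)+(k:ℂ)+1)‖ /
        ((Nat.factorial k : ℝ) * (Nat.factorial (n+k) : ℝ))
      = ‖digammaC ((k:ℂ)+1) + digammaC ((n:ℂ)+(k:ℂ)+1)‖ *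
        (1/((Nat.factorial k : ℝ) * (Nat.factorial (n+k) : ℝ))) := by ring
    _ ≤ ((2*gam + n) + 2*(k:ℝ)) * (2*(1/2:ℝ)^k) := by
        apply mul_le_mul hnum (fac_inv_le n k) (by positivity) ?_
        have := gam_nonneg
        positivity

lemma Bfun_norm_le (n : ℕ) {w : ℂ} (hw : ‖w‖ ≤ 1) :
    ‖Bfun n w‖ ≤ 4*(2*gam+(n:ℝ)) + 8 :=
  (tsum_pow_norm_le (summable_uB (2*gam+(n:ℝ))) (Bcoef_norm_le n) hw).trans
    (le_of_eq (tsum_uB (2*gam+(n:ℝ))))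

lemma Pfun_sub_le (n : ℕ) (hn : 1 ≤ n) {w : ℂ} (hw : ‖w‖ ≤ 1) :
    ‖Pfun n w - (Nat.factorial (n-1) : ℂ)‖ ≤ ‖w‖ * (Nat.factorial n) := by
  obtain ⟨m, rfl⟩ : ∃ m, n = m+1 := ⟨n-1, (Nat.succ_pred_eq_of_pos hn).symm⟩
  unfold Pfun
  rw [Finset.sum_range_succ']
  have h0 : ((Nat.factorial (m+1-1-0) : ℂ)/(Nat.factorial 0 : ℂ)) * w^0
      = (Nat.factorial m : ℂ) := by norm_num
  rw [h0, show m+1-1 = m from rfl, add_sub_cancel_right]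
  refine (norm_sum_le _ _).trans ?_
  have hterm : ∀ k ∈ Finset.range m,
      ‖((Nat.factorial (m+1-1-(k+1)) : ℂ)/(Nat.factorial (k+1) : ℂ)) * w^(k+1)‖
        ≤ (Nat.factorial m : ℝ) * ‖w‖ := by
    intro k hk
    rw [norm_mul, norm_div, Complex.norm_natCast, Complex.norm_natCast, norm_pow]
    have hf1 : (Nat.factorial (m+1-1-(k+1)) : ℝ) ≤ (Nat.factorial m : ℝ) := by
      exact_mod_cast Nat.factorial_le (by omega)
    have hf2 : (1:ℝ) ≤ (Nat.factorial (k+1) : ℝ) := by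
      exact_mod_cast Nat.factorial_pos (k+1)
    have hw1 : ‖w‖^(k+1) ≤ ‖w‖ := by
      calc ‖w‖^(k+1) = ‖w‖^k * ‖w‖ := by rw [pow_succ]
        _ ≤ 1^k * ‖w‖ := by
            apply mul_le_mul_of_nonneg_right _ (norm_nonneg _)
            exact pow_le_pow_left₀ (norm_nonneg _) hw k
        _ = ‖w‖ := by ring
    calc (Nat.factorial (m+1-1-(k+1)) : ℝ) / (Nat.factorial (k+1) : ℝ) * ‖w‖^(k+1)
        ≤ ((Nat.factorial m : ℝ) / 1) * ‖w‖ := by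
          apply mul_le_mul _ hw1 (by positivity) (by positivity)
          exact div_le_div₀ (by positivity) hf1 one_pos hf2
      _ = (Nat.factorial m : ℝ) * ‖w‖ := by ring
  refine (Finset.sum_le_sum hterm).trans ?_
  rw [Finset.sum_const, Finset.card_range, nsmul_eq_mul, Nat.factorial_succ]
  push_cast
  nlinarith [norm_nonneg w, Nat.cast_nonneg (α := ℝ) m,
    Nat.cast_nonneg (α := ℝ) (Nat.factorial m),
    mul_nonneg (Nat.cast_nonneg (α := ℝ) (Nat.factorial m)) (norm_nonneg w)]

lemma logCut_norm_le {w : ℂ} (hw : ‖w‖ ≤ 1) : ‖logCut w‖ ≤ -Real.log ‖w‖ + 5 := by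
  unfold logCut
  have habs : ‖-Complex.I * w‖ = ‖w‖ := by
    rw [norm_mul, norm_neg, Complex.norm_I, one_mul]
  have hre : (Complex.log (-Complex.I * w)).re = Real.log ‖w‖ := by
    rw [Complex.log_re, habs]
  have him : |(Complex.log (-Complex.I * w)).im| ≤ Real.pi := by
    rw [Complex.log_im]; exact Complex.abs_arg_le_pi _
  have hlog : ‖Complex.log (-Complex.I * w)‖ ≤ -Real.log ‖w‖ + Real.pi := by
    refine (Complex.norm_le_abs_re_add_abs_im _).trans ?_
    rw [hre]
    have : |Real.log ‖w‖| = -Real.log ‖w‖ := by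
      rw [abs_of_nonpos (Real.log_nonpos (norm_nonneg _) hw)]
    linarith
  have hc : ‖Complex.I * ((Real.pi:ℂ)/2)‖ = Real.pi/2 := by
    rw [norm_mul, Complex.norm_I, one_mul]
    rw [show ((Real.pi:ℂ)/2) = ((Real.pi/2 : ℝ):ℂ) by push_cast; ring]
    rw [Complex.norm_real, Real.norm_eq_abs, abs_of_pos (by positivity)]
  refine (norm_add_le _ _).trans ?_
  rw [hc]
  have hpi := Real.pi_lt_d2
  linarith

lemma logCut_norm_ge {w : ℂ} (hw : ‖w‖ ≤ 1) :
    -Real.log ‖w‖ - Real.pi/2 ≤ ‖logCut w‖ := by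
  unfold logCut
  have habs : ‖-Complex.I * w‖ = ‖w‖ := by
    rw [norm_mul, norm_neg, Complex.norm_I, one_mul]
  have hre : (Complex.log (-Complex.I * w)).re = Real.log ‖w‖ := by
    rw [Complex.log_re, habs]
  have hlog : -Real.log ‖w‖ ≤ ‖Complex.log (-Complex.I * w)‖ := by
    have h1 : |(Complex.log (-Complex.I * w)).re| ≤ ‖Complex.log (-Complex.I * w)‖ :=
      Complex.abs_re_le_norm _
    rw [hre] at h1
    calc -Real.log ‖w‖ ≤ |Real.log ‖w‖| := neg_le_abs _
      _ ≤ _ := h1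
  have hc : ‖Complex.I * ((Real.pi:ℂ)/2)‖ = Real.pi/2 := by
    rw [norm_mul, Complex.norm_I, one_mul]
    rw [show ((Real.pi:ℂ)/2) = ((Real.pi/2 : ℝ):ℂ) by push_cast; ring]
    rw [Complex.norm_real, Real.norm_eq_abs, abs_of_pos (by positivity)]
  have h2 : ‖Complex.log (-Complex.I * w)‖ - ‖Complex.I * ((Real.pi:ℂ)/2)‖
      ≤ ‖Complex.log (-Complex.I * w) + Complex.I * ((Real.pi:ℂ)/2)‖ := by
    have := norm_sub_norm_le (Complex.log (-Complex.I * w)) (-(Complex.I * ((Real.pi:ℂ)/2)))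
    rw [sub_neg_eq_add, norm_neg] at this
    linarith
  rw [hc] at h2
  linarith



def Dslit : Set ℂ := {w : ℂ | 0 < w.im ∨ w.re ≠ 0}

lemma isOpen_Dslit : IsOpen Dslit := by
  show IsOpen ({w : ℂ | 0 < w.im} ∪ {w : ℂ | w.re ≠ 0})
  exact (isOpen_lt continuous_const Complex.continuous_im).union
    (isOpen_ne_fun Complex.continuous_re continuous_const)

lemma ne_zero_of_mem_Dslit {w : ℂ} (hw : w ∈ Dslit) : w ≠ 0 := by
  rintro rfl
  simp [Dslit] at hw

lemma Dslit_half {w : ℂ} (hw : w ∈ Dslit) : -Complex.I * (w/2) ∈ Complex.slitPlane := by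
  have hre : (-Complex.I * (w/2)).re = w.im/2 := by
    simp [Complex.mul_re, Complex.div_re, Complex.div_im, Complex.normSq_apply]
  have him : (-Complex.I * (w/2)).im = -(w.re/2) := by
    simp [Complex.mul_im, Complex.div_re, Complex.div_im, Complex.normSq_apply]
  rw [Complex.mem_slitPlane_iff, hre, him]
  rcases hw with h | h
  · exact Or.inl (by linarith)
  · exact Or.inr (by simpa using fun hc => h (by linarith))

lemma hankel_diffOn (n : ℕ) :
    DifferentiableOn ℂ (hankelH (n:ℤ)) (ball (0:ℂ) 1 ∩ Dslit) := by
  set U : Set ℂ := ball (0:ℂ) 1 ∩ Dslit with hU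
  have hsq : DifferentiableOn ℂ (fun z : ℂ => z^2/4) U :=
    ((differentiable_pow 2).div_const 4).differentiableOn
  have hsq' : DifferentiableOn ℂ (fun z : ℂ => -(z^2)/4) U :=
    (((differentiable_pow 2).neg).div_const 4).differentiableOn
  have hmaps : MapsTo (fun z : ℂ => z^2/4) U (ball (0:ℂ) 1) := by
    intro z hz
    have hz1 : ‖z‖ < 1 := mem_ball_zero_iff.1 hz.1
    rw [mem_ball_zero_iff]
    rw [norm_div, norm_pow]
    have : ‖(4:ℂ)‖ = 4 := by norm_num
    rw [this]
    nlinarith [norm_nonneg z]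
  have hmaps' : MapsTo (fun z : ℂ => -(z^2)/4) U (ball (0:ℂ) 1) := by
    intro z hz
    have hz1 : ‖z‖ < 1 := mem_ball_zero_iff.1 hz.1
    rw [mem_ball_zero_iff]
    rw [norm_div, norm_neg, norm_pow]
    have : ‖(4:ℂ)‖ = 4 := by norm_num
    rw [this]
    nlinarith [norm_nonneg z]
  have hA : DifferentiableOn ℂ (fun z : ℂ => Afun n (z^2/4)) U :=
    (tsum_pow_differentiableOn summable_uA (Acoef_norm_le n)).comp hsq hmaps
  have hB : DifferentiableOn ℂ (fun z : ℂ => Bfun n (-(z^2)/4)) U :=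
    (tsum_pow_differentiableOn (summable_uB (2*gam+(n:ℝ))) (Bcoef_norm_le n)).comp hsq' hmaps'
  have hlog : DifferentiableOn ℂ (fun z : ℂ => logCut (z/2)) U := by
    intro z hz
    apply DifferentiableAt.differentiableWithinAt
    have hin : DifferentiableAt ℂ (fun z : ℂ => -Complex.I * (z/2)) z :=
      (differentiableAt_id.div_const 2).const_mul _
    have := (Complex.differentiableAt_log (Dslit_half hz.2)).comp z hin
    exact (this.add_const _)
  have hzpow : DifferentiableOn ℂ (fun z : ℂ => (z/2)^(-(n:ℤ))) U := by
    intro z hz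
    apply DifferentiableAt.differentiableWithinAt
    exact (differentiableAt_id.div_const 2).zpow
      (Or.inl (div_ne_zero (ne_zero_of_mem_Dslit hz.2) two_ne_zero))
  have hpow : DifferentiableOn ℂ (fun z : ℂ => (z/2)^n) U :=
    ((differentiable_id.div_const 2).pow n).differentiableOn
  have hP : DifferentiableOn ℂ (fun z : ℂ => Pfun n (z^2/4)) U := by
    unfold Pfun
    apply DifferentiableOn.fun_sum
    intro k _
    exact (hsq.pow k).const_mul _
  have hRHS : DifferentiableOn ℂ (fun z : ℂ =>
      (z/2)^n * Afun n (z^2/4) * (1 + (2/(Real.pi:ℂ)) * Complex.I * logCut (z/2))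
      - (Complex.I/Real.pi) * (z/2)^(-(n:ℤ)) * Pfun n (z^2/4)
      - (Complex.I/Real.pi) * (z/2)^n * Bfun n (-(z^2)/4)) U := by
    apply DifferentiableOn.sub
    apply DifferentiableOn.sub
    · exact (hpow.mul hA).mul ((hlog.const_mul _).const_add 1)
    · exact (hzpow.const_mul _).mul hP
    · exact (hpow.const_mul _).mul hB
  exact hRHS.congr (fun z _ => hankel_eq n z)


lemma norm_sq4 (w : ℂ) : ‖w^2/4‖ = ‖w‖^2/4 := by
  rw [norm_div, norm_pow]; norm_num

lemma norm_negsq4 (w : ℂ) : ‖-(w^2)/4‖ = ‖w‖^2/4 := by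
  rw [norm_div, norm_neg, norm_pow]; norm_num

lemma norm_half (w : ℂ) : ‖w/2‖ = ‖w‖/2 := by
  rw [norm_div]; norm_num

lemma norm_I_div_pi : ‖Complex.I/(Real.pi:ℂ)‖ = 1/Real.pi := by
  rw [norm_div, Complex.norm_I, Complex.norm_real, Real.norm_eq_abs, abs_of_pos Real.pi_pos]

lemma norm_two_div_pi_I : ‖(2/(Real.pi:ℂ)) * Complex.I‖ = 2/Real.pi := by
  rw [norm_mul, Complex.norm_I, mul_one, norm_div, Complex.norm_real, Real.norm_eq_abs,
    abs_of_pos Real.pi_pos]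
  norm_num

lemma one_add_log_le {w : ℂ} (hw0 : w ≠ 0) (hw : ‖w‖ ≤ 1) :
    ‖1 + (2/(Real.pi:ℂ)) * Complex.I * logCut (w/2)‖ ≤ 6 + 2/‖w‖ := by
  set x := ‖w‖ with hx
  have hxpos : 0 < x := norm_pos_iff.2 hw0
  have h1 : ‖w/2‖ = x/2 := norm_half w
  have h2 : ‖logCut (w/2)‖ ≤ -Real.log (x/2) + 5 := by
    have := logCut_norm_le (w := w/2) (by rw [h1]; linarith)
    rwa [h1] at this
  have h3 : -Real.log (x/2) ≤ 2/x := by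
    rw [← Real.log_inv]
    have hinv : (x/2)⁻¹ = 2/x := by field_simp
    rw [hinv]
    have := Real.log_le_sub_one_of_pos (show (0:ℝ) < 2/x by positivity)
    linarith
  have h2pi : (2:ℝ)/Real.pi ≤ 1 := by
    rw [div_le_one Real.pi_pos]; exact Real.two_le_pi
  have hlog5 : -Real.log (x/2) + 5 ≥ 0 := by
    have : Real.log (x/2) ≤ 0 := Real.log_nonpos (by positivity) (by linarith)
    linarith
  calc ‖1 + (2/(Real.pi:ℂ)) * Complex.I * logCut (w/2)‖
      ≤ ‖(1:ℂ)‖ + ‖(2/(Real.pi:ℂ)) * Complex.I‖ * ‖logCut (w/2)‖ := by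
        refine (norm_add_le _ _).trans ?_
        rw [norm_mul]
    _ ≤ 1 + 1 * (-Real.log (x/2) + 5) := by
        rw [norm_one]
        have := mul_le_mul (le_trans (le_of_eq norm_two_div_pi_I) h2pi) h2 (norm_nonneg _)
          zero_le_one
        linarith
    _ ≤ 6 + 2/x := by linarith

lemma hankel_val_bounds (n : ℕ) (hn : 1 ≤ n) :
    ∃ δ : ℝ, 0 < δ ∧ δ ≤ 1/2 ∧ ∀ w : ℂ, w ≠ 0 → ‖w‖ ≤ δ →
      (Nat.factorial (n-1) : ℝ)/Real.pi * (9/10) * (‖w‖/2)^(-(n:ℤ)) ≤ ‖hankelH (n:ℤ) w‖ ∧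
      ‖hankelH (n:ℤ) w‖ ≤ (Nat.factorial (n-1) : ℝ)/Real.pi * (11/10) * (‖w‖/2)^(-(n:ℤ)) := by
  set K := (Nat.factorial (n-1) : ℝ)/Real.pi with hK
  set MB := 4*(2*gam+(n:ℝ)) + 8 with hMB
  set Cn := 5 + (Nat.factorial n : ℝ) + MB with hCn
  have hfacpos : (0:ℝ) < (Nat.factorial (n-1) : ℝ) := by exact_mod_cast Nat.factorial_pos _
  have hfacn : (0:ℝ) ≤ (Nat.factorial n : ℝ) := by positivity
  have hKpos : 0 < K := by rw [hK]; positivity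
  have hMBpos : 0 < MB := by
    have := gam_nonneg
    rw [hMB]
    have : (0:ℝ) ≤ (n:ℝ) := Nat.cast_nonneg n
    nlinarith [gam_nonneg]
  have hCpos : 0 < Cn := by rw [hCn]; linarith
  refine ⟨min (1/2) (K/(10*Cn)), lt_min (by norm_num) (div_pos hKpos (by linarith)),
    min_le_left _ _, ?_⟩
  intro w hw0 hwδ
  set x := ‖w‖ with hx
  have hxpos : 0 < x := norm_pos_iff.2 hw0
  have hx12 : x ≤ 1/2 := hwδ.trans (min_le_left _ _)
  have hxK : x ≤ K/(10*Cn) := hwδ.trans (min_le_right _ _)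
  have hw2 : w/2 ≠ 0 := div_ne_zero hw0 two_ne_zero
  have hpoweq : (w/2)^(-(n:ℤ)) * ((w^2)/4)^n = (w/2)^n := by
    have h1 : (w^2/4) = (w/2)^2 := by ring
    have h2 : (-(n:ℤ)) + ((2*n : ℕ) : ℤ) = (n:ℤ) := by push_cast; ring
    rw [h1, ← pow_mul, ← zpow_natCast (w/2) (2*n), ← zpow_add₀ hw2, h2, zpow_natCast]
  set Rf := (w^2/4)^n * Afun n (w^2/4) * (1 + (2/(Real.pi:ℂ)) * Complex.I * logCut (w/2))
      - (Complex.I/Real.pi) * Pfun n (w^2/4)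
      - (Complex.I/Real.pi) * (w^2/4)^n * Bfun n (-(w^2)/4) with hRf
  have hid : hankelH (n:ℤ) w = (w/2)^(-(n:ℤ)) * Rf := by
    rw [hankel_eq n w, hRf, ← hpoweq]; ring
  have hxx : ‖w^2/4‖ = x^2/4 := norm_sq4 w
  have hxxneg : ‖-(w^2)/4‖ = x^2/4 := norm_negsq4 w
  have hxx1 : x^2/4 ≤ 1 := by nlinarith
  have hxxx : x^2/4 ≤ x := by nlinarith
  have hA4 : ‖Afun n (w^2/4)‖ ≤ 4 := Afun_norm_le n (by rw [hxx]; exact hxx1)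
  have hL : ‖1 + (2/(Real.pi:ℂ)) * Complex.I * logCut (w/2)‖ ≤ 6 + 2/x :=
    one_add_log_le hw0 (by linarith)
  have hpow_le : ‖(w^2/4)^n‖ ≤ x^2/4 := by
    rw [norm_pow, hxx]
    calc (x^2/4)^n ≤ (x^2/4)^1 := pow_le_pow_of_le_one (by positivity) hxx1 hn
      _ = x^2/4 := pow_one _
  have hT1 : ‖(w^2/4)^n * Afun n (w^2/4) *
      (1 + (2/(Real.pi:ℂ)) * Complex.I * logCut (w/2))‖ ≤ 5*x := by
    rw [norm_mul, norm_mul]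
    have hmm : ‖(w^2/4)^n‖ * ‖Afun n (w^2/4)‖ ≤ (x^2/4) * 4 :=
      mul_le_mul hpow_le hA4 (norm_nonneg _) (by positivity)
    have h2 : ‖(w^2/4)^n‖ * ‖Afun n (w^2/4)‖ *
        ‖1 + (2/(Real.pi:ℂ)) * Complex.I * logCut (w/2)‖ ≤ (x^2/4) * 4 * (6 + 2/x) := by
      apply mul_le_mul hmm hL (norm_nonneg _) (by positivity)
    have h3 : (x^2/4) * 4 * (6 + 2/x) = 6*x^2 + 2*x := by field_simp
    nlinarith
  have hIpi : ‖(Complex.I/(Real.pi:ℂ))‖ ≤ 1 := by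
    rw [norm_I_div_pi]
    rw [div_le_one Real.pi_pos]
    linarith [Real.two_le_pi]
  have hPsub : ‖Pfun n (w^2/4) - ((Nat.factorial (n-1) : ℕ):ℂ)‖ ≤ x * (Nat.factorial n) := by
    have := Pfun_sub_le n hn (w := w^2/4) (by rw [hxx]; exact hxx1)
    rw [hxx] at this
    refine this.trans ?_
    apply mul_le_mul_of_nonneg_right hxxx hfacn
  have hT2 : ‖(Complex.I/(Real.pi:ℂ)) * (Pfun n (w^2/4) - ((Nat.factorial (n-1) : ℕ):ℂ))‖
      ≤ x * (Nat.factorial n) := by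
    rw [norm_mul]
    calc ‖(Complex.I/(Real.pi:ℂ))‖ * ‖Pfun n (w^2/4) - ((Nat.factorial (n-1) : ℕ):ℂ)‖
        ≤ 1 * (x * (Nat.factorial n)) := mul_le_mul hIpi hPsub (norm_nonneg _) zero_le_one
      _ = x * (Nat.factorial n) := one_mul _
  have hBle : ‖Bfun n (-(w^2)/4)‖ ≤ MB := by
    rw [hMB]
    exact Bfun_norm_le n (by rw [hxxneg]; exact hxx1)
  have hT3 : ‖(Complex.I/(Real.pi:ℂ)) * (w^2/4)^n * Bfun n (-(w^2)/4)‖ ≤ x * MB := by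
    rw [norm_mul, norm_mul]
    have h1 : ‖(Complex.I/(Real.pi:ℂ))‖ * ‖(w^2/4)^n‖ ≤ x := by
      calc ‖(Complex.I/(Real.pi:ℂ))‖ * ‖(w^2/4)^n‖ ≤ 1 * (x^2/4) :=
            mul_le_mul hIpi hpow_le (norm_nonneg _) zero_le_one
        _ = x^2/4 := one_mul _
        _ ≤ x := hxxx
    exact mul_le_mul h1 hBle (norm_nonneg _) hxpos.le
  have herr : ‖Rf + (Complex.I/(Real.pi:ℂ)) * ((Nat.factorial (n-1) : ℕ):ℂ)‖ ≤ x * Cn := by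
    have hsplit : Rf + (Complex.I/(Real.pi:ℂ)) * ((Nat.factorial (n-1) : ℕ):ℂ)
        = (w^2/4)^n * Afun n (w^2/4) * (1 + (2/(Real.pi:ℂ)) * Complex.I * logCut (w/2))
          - (Complex.I/(Real.pi:ℂ)) * (Pfun n (w^2/4) - ((Nat.factorial (n-1) : ℕ):ℂ))
          - (Complex.I/(Real.pi:ℂ)) * (w^2/4)^n * Bfun n (-(w^2)/4) := by
      rw [hRf]; ring
    rw [hsplit]
    refine (norm_sub_le _ _).trans ?_
    have h1 := norm_sub_le ((w^2/4)^n * Afun n (w^2/4) *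
        (1 + (2/(Real.pi:ℂ)) * Complex.I * logCut (w/2)))
      ((Complex.I/(Real.pi:ℂ)) * (Pfun n (w^2/4) - ((Nat.factorial (n-1) : ℕ):ℂ)))
    have hsum : x * Cn = 5*x + x * (Nat.factorial n) + x * MB := by rw [hCn]; ring
    rw [hsum]
    exact add_le_add (h1.trans (add_le_add hT1 hT2)) hT3
  have hxCn : x * Cn ≤ K/10 := by
    calc x * Cn ≤ (K/(10*Cn)) * Cn := mul_le_mul_of_nonneg_right hxK hCpos.le
      _ = K/10 := by field_simp
  have hfacK : ‖(Complex.I/(Real.pi:ℂ)) * ((Nat.factorial (n-1) : ℕ):ℂ)‖ = K := by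
    rw [norm_mul, norm_I_div_pi, Complex.norm_natCast, hK]
    ring
  have hRlow : K * (9/10) ≤ ‖Rf‖ := by
    have h := norm_sub_norm_le ((Complex.I/(Real.pi:ℂ)) * ((Nat.factorial (n-1) : ℕ):ℂ))
      (Rf + (Complex.I/(Real.pi:ℂ)) * ((Nat.factorial (n-1) : ℕ):ℂ))
    rw [hfacK] at h
    have heq : (Complex.I/(Real.pi:ℂ)) * ((Nat.factorial (n-1) : ℕ):ℂ)
        - (Rf + (Complex.I/(Real.pi:ℂ)) * ((Nat.factorial (n-1) : ℕ):ℂ)) = -Rf := by ring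
    rw [heq, norm_neg] at h
    linarith
  have hRhigh : ‖Rf‖ ≤ K * (11/10) := by
    have h : ‖Rf‖ ≤ ‖Rf + (Complex.I/(Real.pi:ℂ)) * ((Nat.factorial (n-1) : ℕ):ℂ)‖
        + ‖(Complex.I/(Real.pi:ℂ)) * ((Nat.factorial (n-1) : ℕ):ℂ)‖ := by
      have := norm_sub_le (Rf + (Complex.I/(Real.pi:ℂ)) * ((Nat.factorial (n-1) : ℕ):ℂ))
        ((Complex.I/(Real.pi:ℂ)) * ((Nat.factorial (n-1) : ℕ):ℂ))
      simpa [add_sub_cancel_right] using this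
    rw [hfacK] at h
    linarith
  have hnt : ‖(w/2)^(-(n:ℤ))‖ = (x/2)^(-(n:ℤ)) := by
    rw [norm_zpow, norm_half]
  have hzp : (0:ℝ) < (x/2)^(-(n:ℤ)) := zpow_pos (by positivity) _
  rw [hid, norm_mul, hnt]
  constructor
  · nlinarith
  · nlinarith


lemma closedBall_subset_U {z : ℂ} (him : 0 ≤ z.im) {r : ℝ}
    (hr : r < ‖z‖) (hlt : ‖z‖ + r < 1) :
    closedBall z r ⊆ ball (0:ℂ) 1 ∩ Dslit := by
  intro w hw
  rw [mem_closedBall, dist_eq_norm] at hw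
  constructor
  · rw [mem_ball_zero_iff]
    calc ‖w‖ = ‖z + (w - z)‖ := by ring_nf
      _ ≤ ‖z‖ + ‖w - z‖ := norm_add_le _ _
      _ ≤ ‖z‖ + r := by linarith
      _ < 1 := hlt
  · by_contra hcon
    have hcon' : w.im ≤ 0 ∧ w.re = 0 := by
      rw [Dslit, Set.mem_setOf_eq] at hcon
      push_neg at hcon
      exact ⟨hcon.1, hcon.2⟩
    have hsq : ‖w - z‖^2 = (w.re - z.re)^2 + (w.im - z.im)^2 := by
      rw [Complex.sq_norm, Complex.normSq_apply, Complex.sub_re,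
        Complex.sub_im]
      ring
    have hzsq : ‖z‖^2 = z.re^2 + z.im^2 := by
      rw [Complex.sq_norm, Complex.normSq_apply]
      ring
    have hd : ‖w - z‖ < ‖z‖ := lt_of_le_of_lt hw hr
    have hdsq : ‖w - z‖^2 < ‖z‖^2 := by nlinarith [norm_nonneg (w-z)]
    have hre : (w.re - z.re)^2 = z.re^2 := by rw [hcon'.2]; ring
    have hkey : z.im^2 ≤ (w.im - z.im)^2 := by
      nlinarith [mul_nonneg (neg_nonneg.2 hcon'.1) him, sq_nonneg w.im]
    linarith

lemma one_add_inv_pow_le (n : ℕ) (hn : 1 ≤ n) : (((n:ℝ)+1)/n)^n ≤ 3 := by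
  have hnpos : (0:ℝ) < n := by exact_mod_cast hn
  have h1 : ((n:ℝ)+1)/n = 1 + 1/n := by field_simp
  have h2 : (1:ℝ) + 1/n ≤ Real.exp (1/n) := by
    have := Real.add_one_le_exp (1/(n:ℝ))
    linarith
  have h3 : ((1:ℝ) + 1/n)^n ≤ Real.exp (1/n)^n :=
    pow_le_pow_left₀ (by positivity) h2 n
  have h4 : Real.exp (1/(n:ℝ))^n = Real.exp 1 := by
    rw [← Real.exp_nat_mul]
    congr 1
    field_simp
  rw [h1]
  refine h3.trans ?_
  rw [h4]
  have := Real.exp_one_lt_d9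
  linarith

lemma hankel0_decomp {w : ℂ} (hw0 : w ≠ 0) (hw : ‖w‖ ≤ 1/2) :
    ‖hankelH (0:ℤ) w - (2/(Real.pi:ℂ)) * Complex.I * logCut (w/2)‖ ≤ 8*gam + 11 := by
  set x := ‖w‖ with hx
  have hxpos : 0 < x := norm_pos_iff.2 hw0
  have hid : hankelH (0:ℤ) w
      = Afun 0 (w^2/4) * (1 + (2/(Real.pi:ℂ)) * Complex.I * logCut (w/2))
        - (Complex.I/Real.pi) * Bfun 0 (-(w^2)/4) := by
    have := hankel_eq 0 w
    rw [Nat.cast_zero] at this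
    rw [this]
    simp [Pfun]
  have hsplit : hankelH (0:ℤ) w - (2/(Real.pi:ℂ)) * Complex.I * logCut (w/2)
      = (Afun 0 (w^2/4) - 1) * (1 + (2/(Real.pi:ℂ)) * Complex.I * logCut (w/2))
        + 1 - (Complex.I/Real.pi) * Bfun 0 (-(w^2)/4) := by
    rw [hid]; ring
  have hxx : ‖w^2/4‖ = x^2/4 := norm_sq4 w
  have hxx1 : x^2/4 ≤ 1 := by nlinarith
  have hA1 : ‖Afun 0 (w^2/4) - 1‖ ≤ x^2/2 := by
    have := Afun_sub_le 0 (w := w^2/4) (by rw [hxx]; exact hxx1)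
    simp only [Nat.factorial_zero, Nat.cast_one] at this
    rw [hxx] at this
    calc ‖Afun 0 (w^2/4) - 1‖ = ‖Afun 0 (w^2/4) - 1/1‖ := by norm_num
      _ ≤ x^2/4 * 2 := this
      _ = x^2/2 := by ring
  have hL : ‖1 + (2/(Real.pi:ℂ)) * Complex.I * logCut (w/2)‖ ≤ 6 + 2/x :=
    one_add_log_le hw0 (by linarith)
  have hB : ‖Bfun 0 (-(w^2)/4)‖ ≤ 8*gam + 8 := by
    have h := Bfun_norm_le 0 (w := -(w^2)/4) (by rw [norm_negsq4]; exact hxx1)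
    refine h.trans (le_of_eq ?_)
    push_cast
    ring
  have hIpi : ‖(Complex.I/(Real.pi:ℂ))‖ ≤ 1 := by
    rw [norm_I_div_pi, div_le_one Real.pi_pos]
    linarith [Real.two_le_pi]
  have h1 : ‖(Afun 0 (w^2/4) - 1) * (1 + (2/(Real.pi:ℂ)) * Complex.I * logCut (w/2))‖
      ≤ 3*x^2 + x := by
    rw [norm_mul]
    have := mul_le_mul hA1 hL (norm_nonneg _) (by positivity)
    have heq : x^2/2 * (6 + 2/x) = 3*x^2 + x := by field_simp; ring
    linarith
  have h2 : ‖(Complex.I/(Real.pi:ℂ)) * Bfun 0 (-(w^2)/4)‖ ≤ 8*gam + 8 := by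
    rw [norm_mul]
    calc ‖(Complex.I/(Real.pi:ℂ))‖ * ‖Bfun 0 (-(w^2)/4)‖ ≤ 1 * (8*gam + 8) :=
          mul_le_mul hIpi hB (norm_nonneg _) zero_le_one
      _ = 8*gam + 8 := one_mul _
  rw [hsplit]
  refine (norm_sub_le _ _).trans ?_
  have h3 := norm_add_le ((Afun 0 (w^2/4) - 1) *
    (1 + (2/(Real.pi:ℂ)) * Complex.I * logCut (w/2))) (1:ℂ)
  rw [norm_one] at h3
  nlinarith

/-- For every nonnegative integer `n` there is `Cₙ > 0` such that for all nonzero `z` in the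
closed upper half-plane with `|z| ≤ Cₙ`, `|Hₙ'(z)/Hₙ(z)| ≤ 4(n+1)/|z|`. -/
theorem hankel_log_deriv_near_zero (n : ℕ) :
    ∃ C > 0, ∀ z : ℂ, z ≠ 0 → 0 ≤ z.im → ‖z‖ ≤ C →
      ‖deriv (hankelH n) z / hankelH n z‖ ≤ 4*(n+1)/‖z‖ := by
  rcases Nat.eq_zero_or_pos n with rfl | hn
  · -- n = 0
    set c0 : ℝ := 8*gam + 11 with hc0
    have hc0pos : 0 < c0 := by have := gam_nonneg; rw [hc0]; linarith
    set u : ℝ := (Real.pi/2)*(3*c0+8) with hu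
    have hupos : 0 < u := by
      rw [hu]; nlinarith [Real.pi_pos]
    refine ⟨min (1/3) (2*Real.exp (-u)), lt_min (by norm_num) (by positivity), ?_⟩
    intro z hz0 him hzC
    rw [Nat.cast_zero]
    set x := ‖z‖ with hx
    have hxpos : 0 < x := norm_pos_iff.2 hz0
    have hx3 : x ≤ 1/3 := hzC.trans (min_le_left _ _)
    have hxe : x ≤ 2*Real.exp (-u) := hzC.trans (min_le_right _ _)
    set L : ℝ := -Real.log (x/2) with hL
    have hLu : u ≤ L := by
      have h1 : x/2 ≤ Real.exp (-u) := by linarith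
      have h2 := Real.log_le_log (by positivity) h1
      rw [Real.log_exp] at h2
      rw [hL]; linarith
    have h2pi : (0:ℝ) < 2/Real.pi := by positivity
    have h2pi1 : (2:ℝ)/Real.pi ≤ 1 := by
      rw [div_le_one Real.pi_pos]; linarith [Real.two_le_pi]
    have h2piu : (2/Real.pi)*u = 3*c0+8 := by
      rw [hu]; field_simp
    -- lower bound at z
    have hlow : (2/Real.pi)*L - (c0+1) ≤ ‖hankelH (0:ℤ) z‖ := by
      have hdec := hankel0_decomp hz0 (by linarith)
      have hcl : ‖(2/(Real.pi:ℂ)) * Complex.I * logCut (z/2)‖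
          = (2/Real.pi)*‖logCut (z/2)‖ := by rw [norm_mul, norm_two_div_pi_I]
      have hge := logCut_norm_ge (w := z/2) (by rw [norm_half]; linarith)
      rw [norm_half] at hge
      have htri := norm_sub_norm_le ((2/(Real.pi:ℂ)) * Complex.I * logCut (z/2))
        (hankelH (0:ℤ) z)
      rw [norm_sub_rev, hcl] at htri
      have hmul : (2/Real.pi)*(L - Real.pi/2) ≤ (2/Real.pi)*‖logCut (z/2)‖ := by
        apply mul_le_mul_of_nonneg_left _ h2pi.le
        rw [hL]; linarith
      have hone : (2/Real.pi)*(Real.pi/2) = 1 := by field_simp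
      nlinarith [hdec, htri, hmul]
    have hlowpos : 0 < (2/Real.pi)*L - (c0+1) := by
      have hm : (2/Real.pi)*u ≤ (2/Real.pi)*L := mul_le_mul_of_nonneg_left hLu h2pi.le
      linarith
    -- upper bound on circle
    set r := x/2 with hr
    have hrpos : 0 < r := by rw [hr]; positivity
    have hsub : closedBall z r ⊆ ball (0:ℂ) 1 ∩ Dslit :=
      closedBall_subset_U him (by rw [hr]; linarith) (by rw [hr]; linarith)
    have hM : ∀ w ∈ closedBall z r, ‖hankelH (0:ℤ) w‖ ≤ (2/Real.pi)*L + (c0+6) := by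
      intro w hwB
      rw [mem_closedBall, dist_eq_norm] at hwB
      have hwlow : x - r ≤ ‖w‖ := by
        have h := norm_sub_norm_le z w
        rw [norm_sub_rev, ← hx] at h
        linarith [h]
      have hwhigh : ‖w‖ ≤ x + r := by
        have h := norm_add_le z (w - z)
        have h2 : z + (w - z) = w := by ring
        rw [h2, ← hx] at h
        linarith
      have hw0' : w ≠ 0 := by
        apply norm_pos_iff.1
        rw [hr] at hwlow
        linarith
      have hw12 : ‖w‖ ≤ 1/2 := by rw [hr] at hwhigh; linarith
      have hdec := hankel0_decomp hw0' hw12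
      have hup := logCut_norm_le (w := w/2) (by rw [norm_half]; linarith)
      rw [norm_half] at hup
      have hLw : -Real.log (‖w‖/2) ≤ L + 1 := by
        have h1 : x/4 ≤ ‖w‖/2 := by rw [hr] at hwlow; linarith
        have h2 : Real.log (x/4) ≤ Real.log (‖w‖/2) := Real.log_le_log (by positivity) h1
        have h3 : Real.log (x/4) = Real.log (x/2) + Real.log (1/2) := by
          rw [← Real.log_mul (by positivity) (by norm_num)]
          congr 1
          ring
        have h4 : Real.log (1/2) = -Real.log 2 := by rw [one_div, Real.log_inv]
        have h5 : Real.log 2 ≤ 1 := by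
          have := Real.log_le_sub_one_of_pos (show (0:ℝ) < 2 by norm_num)
          linarith
        rw [hL]
        linarith
      have hcl : ‖(2/(Real.pi:ℂ)) * Complex.I * logCut (w/2)‖
          = (2/Real.pi)*‖logCut (w/2)‖ := by rw [norm_mul, norm_two_div_pi_I]
      have htri : ‖hankelH (0:ℤ) w‖
          ≤ ‖hankelH (0:ℤ) w - (2/(Real.pi:ℂ)) * Complex.I * logCut (w/2)‖
            + ‖(2/(Real.pi:ℂ)) * Complex.I * logCut (w/2)‖ := by
        have := norm_add_le (hankelH (0:ℤ) w - (2/(Real.pi:ℂ)) * Complex.I * logCut (w/2))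
          ((2/(Real.pi:ℂ)) * Complex.I * logCut (w/2))
        simpa [sub_add_cancel] using this
      have hmul : (2/Real.pi)*‖logCut (w/2)‖ ≤ (2/Real.pi)*(L + 6) := by
        apply mul_le_mul_of_nonneg_left _ h2pi.le
        linarith
      have hfin : (2/Real.pi)*(L+6) ≤ (2/Real.pi)*L + 6 := by
        have : (2/Real.pi)*6 ≤ 6 := by nlinarith
        nlinarith
      rw [hcl] at htri
      linarith
    have hdiff := hankel_diffOn 0
    rw [Nat.cast_zero] at hdiff
    have hderiv := cauchy_deriv_bound hrpos (isOpen_ball.inter isOpen_Dslit) hdiff hsub hM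
    have hHpos : 0 < ‖hankelH (0:ℤ) z‖ := lt_of_lt_of_le hlowpos hlow
    rw [norm_div, div_le_div_iff₀ hHpos hxpos]
    have h1 : ‖deriv (hankelH (0:ℤ)) z‖ * x ≤ (((2/Real.pi)*L + (c0+6))/r)*x :=
      mul_le_mul_of_nonneg_right hderiv hxpos.le
    have h2 : (((2/Real.pi)*L + (c0+6))/r)*x = 2*((2/Real.pi)*L + (c0+6)) := by
      rw [hr]; field_simp
    have hkey : 2*((2/Real.pi)*L + (c0+6)) ≤ 4*((2/Real.pi)*L - (c0+1)) := by
      have hm : (2/Real.pi)*u ≤ (2/Real.pi)*L := mul_le_mul_of_nonneg_left hLu h2pi.le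
      linarith
    have hfin : 4*((2/Real.pi)*L - (c0+1)) ≤ 4*(((0:ℕ):ℝ)+1)*‖hankelH (0:ℤ) z‖ := by
      push_cast
      nlinarith [hlow]
    push_cast at hfin ⊢
    nlinarith [h1, h2, hkey, hfin]
  · -- n ≥ 1
    obtain ⟨δ, hδpos, hδ12, hbd⟩ := hankel_val_bounds n hn
    refine ⟨δ/2, by positivity, ?_⟩
    intro z hz0 him hzC
    set x := ‖z‖ with hx
    have hxpos : 0 < x := norm_pos_iff.2 hz0
    have hxδ2 : x ≤ δ/2 := hzC
    have hn1 : (2:ℝ) ≤ (n:ℝ)+1 := by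
      have : (1:ℝ) ≤ (n:ℝ) := by exact_mod_cast hn
      linarith
    set r := x/((n:ℝ)+1) with hr
    have hrpos : 0 < r := by rw [hr]; positivity
    have hrx2 : r ≤ x/2 := by
      rw [hr, div_le_div_iff₀ (by linarith) (by norm_num)]
      nlinarith
    have hrx : r < x := lt_of_le_of_lt hrx2 (by linarith)
    have hsub : closedBall z r ⊆ ball (0:ℂ) 1 ∩ Dslit :=
      closedBall_subset_U him hrx (by linarith)
    set K := (Nat.factorial (n-1) : ℝ)/Real.pi with hK
    have hfacpos : (0:ℝ) < (Nat.factorial (n-1) : ℝ) := by exact_mod_cast Nat.factorial_pos _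
    have hKpos : 0 < K := by rw [hK]; positivity
    have hzppos : (0:ℝ) < (x/2)^(-(n:ℤ)) := zpow_pos (by positivity) _
    have hlo := (hbd z hz0 (by linarith : x ≤ δ)).1
    have hHpos : 0 < ‖hankelH (n:ℤ) z‖ :=
      lt_of_lt_of_le (by positivity : (0:ℝ) < (Nat.factorial (n-1) : ℝ)/Real.pi * (9/10) * (x/2)^(-(n:ℤ))) hlo
    have hM : ∀ w ∈ closedBall z r, ‖hankelH (n:ℤ) w‖
        ≤ (Nat.factorial (n-1) : ℝ)/Real.pi * (11/10) * (3*(x/2)^(-(n:ℤ))) := by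
      intro w hwB
      rw [mem_closedBall, dist_eq_norm] at hwB
      have hwlow : x - r ≤ ‖w‖ := by
        have h := norm_sub_norm_le z w
        rw [norm_sub_rev, ← hx] at h
        linarith
      have hwhigh : ‖w‖ ≤ x + r := by
        have h := norm_add_le z (w - z)
        have h2 : z + (w - z) = w := by ring
        rw [h2, ← hx] at h
        linarith
      have hxr : 0 < x - r := by linarith
      have hw0' : w ≠ 0 := norm_pos_iff.1 (by linarith)
      have hup := (hbd w hw0' (by linarith : ‖w‖ ≤ δ)).2
      refine hup.trans ?_
      have hzw : ((x-r)/2)^n ≤ (‖w‖/2)^n :=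
        pow_le_pow_left₀ (by positivity) (by linarith) n
      have hstep1 : (‖w‖/2)^(-(n:ℤ)) ≤ ((x-r)/2)^(-(n:ℤ)) := by
        rw [zpow_neg, zpow_neg, zpow_natCast, zpow_natCast]
        exact inv_anti₀ (pow_pos (by positivity) n) hzw
      have hnne : ((n:ℝ)) ≠ 0 := by positivity
      have hxeq : (x/2) = ((x-r)/2)*(((n:ℝ)+1)/n) := by
        rw [hr]; field_simp; ring
      have hA : (x/2)^n ≤ 3*((x-r)/2)^n := by
        rw [hxeq, mul_pow]
        have h3 := one_add_inv_pow_le n hn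
        have hpw : (0:ℝ) ≤ ((x-r)/2)^n := by positivity
        nlinarith [mul_le_mul_of_nonneg_left h3 hpw]
      have hstep2 : ((x-r)/2)^(-(n:ℤ)) ≤ 3*(x/2)^(-(n:ℤ)) := by
        rw [zpow_neg, zpow_neg, zpow_natCast, zpow_natCast]
        have h1 : (0:ℝ) < ((x-r)/2)^n := pow_pos (by positivity) n
        have h2 : (0:ℝ) < (x/2)^n := pow_pos (by positivity) n
        rw [inv_eq_one_div, inv_eq_one_div,
          show (3:ℝ)*(1/(x/2)^n) = 3/(x/2)^n by ring,
          div_le_div_iff₀ h1 h2]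
        nlinarith [hA]
      have hchain : (‖w‖/2)^(-(n:ℤ)) ≤ 3*(x/2)^(-(n:ℤ)) := hstep1.trans hstep2
      apply mul_le_mul_of_nonneg_left hchain
      positivity
    have hderiv := cauchy_deriv_bound hrpos (isOpen_ball.inter isOpen_Dslit)
      (hankel_diffOn n) hsub hM
    rw [norm_div, div_le_div_iff₀ hHpos hxpos]
    set M := (Nat.factorial (n-1) : ℝ)/Real.pi * (11/10) * (3*(x/2)^(-(n:ℤ))) with hMdef
    have h1 : ‖deriv (hankelH (n:ℤ)) z‖ * x ≤ (M/r)*x :=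
      mul_le_mul_of_nonneg_right hderiv hxpos.le
    have h2 : (M/r)*x = M*((n:ℝ)+1) := by
      rw [hr]; field_simp
    have h3 : M*((n:ℝ)+1) ≤ 4*((n:ℝ)+1)*‖hankelH (n:ℤ) z‖ := by
      have hMlo : M ≤ 4*((Nat.factorial (n-1) : ℝ)/Real.pi * (9/10) * (x/2)^(-(n:ℤ))) := by
        rw [hMdef]
        nlinarith [hzppos, hKpos]
      have hM4 : M ≤ 4*‖hankelH (n:ℤ) z‖ := hMlo.trans (by linarith)
      nlinarith [norm_nonneg (hankelH (n:ℤ) z), hn1]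
    calc ‖deriv (hankelH (n:ℤ)) z‖ * x ≤ (M/r)*x := h1
      _ = M*((n:ℝ)+1) := h2
      _ ≤ 4*((n:ℝ)+1)*‖hankelH (n:ℤ) z‖ := h3
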